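/- Two Gauss codes w and w' on n letters are unorientedly equivalent if and only if the unordered pairs {proj^LC(w), proj^LC(rev(w))} and {proj^LC(w'), proj^LC(rev(w'))} are equal. -/

import Mathlib

/-- A Gauss code on `n` letters: a bijection from the `2*n` positions to
letters paired with a side (`false` = L, `true` = R). -/
abbrev GaussCode (n : ℕ) := Fin (2 * n) ≃ Fin n × Bool

instance (n : ℕ) [NeZero n] : NeZero (2 * n) := ⟨by have := NeZero.ne n; omega⟩

namespace GaussCode

variable {n : ℕ}

/-- `π_*(w)`: relabel the letters by the permutation `π`. -/
def permAct (π : Equiv.Perm (Fin n)) (w : GaussCode n) : GaussCode n :=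
  w.trans (π.prodCongr (Equiv.refl Bool))

/-- `shift[m](w)`: the code whose entry at position `i` is the entry of `w` at
position `i + m` (mod `2n`). -/
def shift [NeZero n] (m : ℕ) (w : GaussCode n) : GaussCode n :=
  (Equiv.addRight (Fin.ofNat (2 * n) m)).trans w

/-- `rev(w)`: the code whose entry at position `i` is the entry of `w` at
position `2n - 1 - i`. -/
def rev (w : GaussCode n) : GaussCode n :=
  (Fin.revPerm).trans w

/-- A Gauss code is left preferred if its `L`-entries appear in the order
`(1,L), (2,L), …, (n,L)` and its entry at position `0` is `(1,L)`. -/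
def IsLeftPreferred [NeZero n] (w : GaussCode n) : Prop :=
  StrictMono (fun j : Fin n => w.symm (j, false)) ∧ w 0 = (0, false)

/-- `proj^LP(w)`: relabel letters in the order of appearance of their `L`-entries,
then rotate so that `(1,L)` is at position `0`. -/
def projLP [NeZero n] (w : GaussCode n) : GaussCode n :=
  let π : Equiv.Perm (Fin n) := (Tuple.sort (fun j : Fin n => w.symm (j, false)))⁻¹
  let w' := permAct π w
  shift ((w'.symm ((0 : Fin n), false)).val) w'

/-- `shift^LP(w) := proj^LP(shift[1](w))`. -/
def shiftLP [NeZero n] (w : GaussCode n) : GaussCode n :=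
  projLP (shift 1 w)

/-- `rev^LP(w) := proj^LP(rev(w))`. -/
def revLP [NeZero n] (w : GaussCode n) : GaussCode n :=
  projLP (rev w)

/-- The value of an entry in the order `(1,L) < (1,R) < (2,L) < (2,R) < …`. -/
def entryKey (e : Fin n × Bool) : ℕ :=
  2 * e.1.val + (if e.2 then 1 else 0)

/-- Lexicographic (strict) order on Gauss codes, comparing entries position by
position in the order `(1,L) < (1,R) < (2,L) < (2,R) < …`. -/
def lexLt (w w' : GaussCode n) : Prop :=
  ∃ i : Fin (2 * n), (∀ k, k < i → w k = w' k) ∧ entryKey (w i) < entryKey (w' i)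

/-- Lexicographic order on Gauss codes. -/
def lexLe (w w' : GaussCode n) : Prop :=
  w = w' ∨ lexLt w w'

/-- A left preferred Gauss code is left canonical if it is the smallest element
of its `shift^LP`-orbit `{w, shift^LP(w), …, (shift^LP)^{n-1}(w)}`. -/
def IsLeftCanonical [NeZero n] (w : GaussCode n) : Prop :=
  IsLeftPreferred w ∧ ∀ k < n, lexLe w (shiftLP^[k] w)

/-- `proj^LC(w)`: the smallest element of the `shift^LP`-orbit of `proj^LP(w)`. -/
noncomputable def projLC [NeZero n] (w : GaussCode n) : GaussCode n :=
  letI := Classical.propDecidable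
  if h : ∃ v : GaussCode n, (∃ k < n, v = shiftLP^[k] (projLP w)) ∧
      ∀ k < n, lexLe v (shiftLP^[k] (projLP w))
  then h.choose else projLP w

/-- `rev^LC(w) := proj^LC(rev(w))`. -/
noncomputable def revLC [NeZero n] (w : GaussCode n) : GaussCode n :=
  projLC (rev w)

/-- Oriented equivalence of Gauss codes: `w' = shift[m](π_*(w))` for some
permutation `π` and integer `m`. -/
def OrientedEquiv [NeZero n] (w w' : GaussCode n) : Prop :=
  ∃ (π : Equiv.Perm (Fin n)) (m : ℕ), w' = shift m (permAct π w)

/-- Unoriented equivalence: `w` is orientedly equivalent to `w'` or to `rev(w')`. -/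
def UnorientedEquiv [NeZero n] (w w' : GaussCode n) : Prop :=
  OrientedEquiv w w' ∨ OrientedEquiv w (rev w')

/-- A Gauss code is 1-reducible if two cyclically adjacent entries share the same letter. -/
def OneReducible [NeZero n] (w : GaussCode n) : Prop :=
  ∃ i : Fin (2 * n), (w i).1 = (w (i + 1)).1

/-- A Gauss code is 2-reducible (cyclically, with `L = false`, `R = true`). -/
def TwoReducible [NeZero n] (w : GaussCode n) : Prop :=
  ∃ (i i' : Fin (2 * n)) (j k : Fin n), j ≠ k ∧
    ((w i = (j, false) ∧ w (i + 1) = (k, true) ∧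
        w i' = (j, true) ∧ w (i' + 1) = (k, false)) ∨
     (w i = (j, false) ∧ w (i + 1) = (k, true) ∧
        w i' = (k, false) ∧ w (i' + 1) = (j, true)) ∨
     (w i = (j, true) ∧ w (i + 1) = (k, false) ∧
        w i' = (k, true) ∧ w (i' + 1) = (j, false)))

/-- A Gauss code is minimal if it is neither 1-reducible nor 2-reducible. -/
def IsMinimal [NeZero n] (w : GaussCode n) : Prop :=
  ¬ OneReducible w ∧ ¬ TwoReducible w

/-- `σ_w`: the involution of positions sending each position to the unique other
position carrying the same letter. -/
def sigmaMap (w : GaussCode n) : Fin (2 * n) → Fin (2 * n) :=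
  fun i => w.symm ((w i).1, !(w i).2)

/-- `h_w`: the side (`false` = L, `true` = R) of the entry at each position. -/
def hMap (w : GaussCode n) : Fin (2 * n) → Bool :=
  fun i => (w i).2

open Fin.CommRing

/-! ### Basic algebra of `shift`, `permAct`, `rev` -/

lemma shift_apply [NeZero n] (m : ℕ) (w : GaussCode n) (i : Fin (2 * n)) :
    shift m w i = w (i + (m : Fin (2 * n))) := rfl

lemma permAct_apply (π : Equiv.Perm (Fin n)) (w : GaussCode n) (i : Fin (2 * n)) :
    permAct π w i = (π (w i).1, (w i).2) := rfl

lemma rev_apply (w : GaussCode n) (i : Fin (2 * n)) : rev w i = w i.rev := rfl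

lemma shift_congr [NeZero n] {a b : ℕ} (h : (a : Fin (2 * n)) = (b : Fin (2 * n)))
    (w : GaussCode n) : shift a w = shift b w := by
  unfold shift; rw [show Fin.ofNat (2 * n) a = Fin.ofNat (2 * n) b from h]

lemma shift_shift [NeZero n] (a b : ℕ) (w : GaussCode n) :
    shift a (shift b w) = shift (a + b) w := by
  apply Equiv.ext; intro i
  show w ((i + (a : Fin (2 * n))) + (b : Fin (2 * n))) = w (i + ((a + b : ℕ) : Fin (2 * n)))
  congr 1
  push_cast
  ring

lemma shift_zero [NeZero n] (w : GaussCode n) : shift 0 w = w := by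
  apply Equiv.ext; intro i
  show w (i + ((0 : ℕ) : Fin (2 * n))) = w i
  norm_num

lemma permAct_permAct (τ σ : Equiv.Perm (Fin n)) (w : GaussCode n) :
    permAct τ (permAct σ w) = permAct (τ * σ) w :=
  Equiv.ext fun _ => rfl

lemma permAct_one (w : GaussCode n) : permAct 1 w = w :=
  Equiv.ext fun _ => rfl

lemma shift_permAct [NeZero n] (m : ℕ) (π : Equiv.Perm (Fin n)) (w : GaussCode n) :
    shift m (permAct π w) = permAct π (shift m w) :=
  Equiv.ext fun _ => rfl

lemma hMap_shift [NeZero n] (m : ℕ) (w : GaussCode n) (i : Fin (2 * n)) :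
    hMap (shift m w) i = hMap w (i + (m : Fin (2 * n))) := rfl

lemma hMap_permAct (π : Equiv.Perm (Fin n)) (w : GaussCode n) :
    hMap (permAct π w) = hMap w := rfl

/-! ### Oriented equivalence is an equivalence relation -/

lemma oe_refl [NeZero n] (w : GaussCode n) : OrientedEquiv w w :=
  ⟨1, 0, by rw [permAct_one, shift_zero]⟩

lemma oe_trans [NeZero n] {w₁ w₂ w₃ : GaussCode n}
    (h : OrientedEquiv w₁ w₂) (h' : OrientedEquiv w₂ w₃) : OrientedEquiv w₁ w₃ := by
  obtain ⟨π, m, rfl⟩ := h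
  obtain ⟨π', m', rfl⟩ := h'
  exact ⟨π' * π, m' + m, by
    rw [shift_permAct m, permAct_permAct, ← shift_permAct, shift_shift]⟩

lemma cast_mul_cancel [NeZero n] (m : ℕ) :
    (((2 * n - 1) * m + m : ℕ) : Fin (2 * n)) = ((0 : ℕ) : Fin (2 * n)) := by
  have h : (2 * n - 1) * m + m = 2 * n * m := by
    have h1 : 2 * n - 1 + 1 = 2 * n := by have := NeZero.ne n; omega
    calc (2 * n - 1) * m + m = (2 * n - 1 + 1) * m := by ring
    _ = 2 * n * m := by rw [h1]
  rw [h, Nat.cast_mul, Fin.natCast_self, zero_mul, Nat.cast_zero]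

lemma oe_symm [NeZero n] {w₁ w₂ : GaussCode n}
    (h : OrientedEquiv w₁ w₂) : OrientedEquiv w₂ w₁ := by
  obtain ⟨π, m, rfl⟩ := h
  refine ⟨π⁻¹, (2 * n - 1) * m, ?_⟩
  rw [shift_permAct, shift_shift, shift_congr (cast_mul_cancel m), shift_zero,
    permAct_permAct, inv_mul_cancel, permAct_one]

lemma rev_rev (w : GaussCode n) : rev (rev w) = w := by
  apply Equiv.ext; intro i
  show w i.rev.rev = w i
  rw [Fin.rev_rev]

lemma oe_rev [NeZero n] {w₁ w₂ : GaussCode n}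
    (h : OrientedEquiv w₁ w₂) : OrientedEquiv (rev w₁) (rev w₂) := by
  obtain ⟨π, m, rfl⟩ := h
  refine ⟨π, (2 * n - 1) * m, ?_⟩
  apply Equiv.ext; intro i
  show (π ((w₁ (i.rev + (m : Fin (2 * n)))).1), (w₁ (i.rev + (m : Fin (2 * n)))).2) =
    (π ((w₁ ((i + (((2 * n - 1) * m : ℕ) : Fin (2 * n))).rev)).1),
      (w₁ ((i + (((2 * n - 1) * m : ℕ) : Fin (2 * n))).rev)).2)
  have hc : (((2 * n - 1) * m : ℕ) : Fin (2 * n)) = -(m : Fin (2 * n)) := by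
    have := cast_mul_cancel (n := n) m
    push_cast at this ⊢
    linear_combination this
  rw [Fin.rev_add, hc, sub_neg_eq_add]

/-! ### The minimal `L` position -/

lemma hMap_symm [NeZero n] (w : GaussCode n) (j : Fin n) :
    hMap w (w.symm (j, false)) = false := by
  simp [hMap]

/-- The least position carrying an `L` entry. -/
def minL [NeZero n] (w : GaussCode n) : Fin (2 * n) :=
  (Finset.univ.filter (fun i => hMap w i = false)).min'
    ⟨w.symm ((0 : Fin n), false), by simp [hMap_symm]⟩

lemma hMap_minL [NeZero n] (w : GaussCode n) : hMap w (minL w) = false := by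
  have := Finset.min'_mem (Finset.univ.filter (fun i => hMap w i = false))
    ⟨w.symm ((0 : Fin n), false), by simp [hMap_symm]⟩
  simpa [minL] using this

lemma minL_le [NeZero n] (w : GaussCode n) {i : Fin (2 * n)} (h : hMap w i = false) :
    minL w ≤ i :=
  Finset.min'_le _ _ (by simpa using h)

/-! ### `projLP` produces a left preferred code anchored at `minL` -/

lemma projLP_spec [NeZero n] (w : GaussCode n) :
    IsLeftPreferred (projLP w) ∧
      ∃ π : Equiv.Perm (Fin n), projLP w = shift (minL w).val (permAct π w) := by
  set f : Fin n → Fin (2 * n) := fun j => w.symm (j, false) with hf_def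
  have hf : Function.Injective f := by
    intro a b h
    have := w.symm.injective h
    exact (Prod.mk.injEq _ _ _ _).mp this |>.1
  set s := Tuple.sort f with hs_def
  have hmono : StrictMono (f ∘ s) :=
    (Tuple.monotone_sort f).strictMono_of_injective (hf.comp s.injective)
  set π : Equiv.Perm (Fin n) := s⁻¹ with hπ_def
  set w' := permAct π w with hw'_def
  have hw'symm : ∀ j : Fin n, w'.symm (j, false) = f (s j) := by
    intro j
    have h1 : w' (w.symm (π⁻¹ j, false)) = (j, false) := by
      show (π ((w (w.symm (π⁻¹ j, false))).1), (w (w.symm (π⁻¹ j, false))).2) = (j, false)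
      rw [Equiv.apply_symm_apply]
      simp [hπ_def]
    have h2 : w'.symm (j, false) = w.symm (π⁻¹ j, false) := by
      rw [← h1, Equiv.symm_apply_apply]
    rw [h2, hπ_def, inv_inv]
  have hg : StrictMono (fun j : Fin n => w'.symm (j, false)) := by
    have : (fun j : Fin n => w'.symm (j, false)) = f ∘ s := funext hw'symm
    rw [this]; exact hmono
  have hproj : projLP w = shift ((w'.symm ((0 : Fin n), false)).val) w' := rfl
  have hm0 : (((w'.symm ((0 : Fin n), false)).val : ℕ) : Fin (2 * n)) =
      w'.symm ((0 : Fin n), false) := Fin.cast_val_eq_self _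
  have hMapw' : hMap w' = hMap w := hMap_permAct π w
  have hmin : w'.symm ((0 : Fin n), false) = minL w := by
    apply le_antisymm
    · set j₀ := (w (minL w)).1 with hj₀
      have hLm : w (minL w) = (j₀, false) := by
        have := hMap_minL w
        rw [hMap] at this
        exact Prod.ext rfl this
      have hfj : f j₀ = minL w := by
        rw [hf_def]
        simp only
        rw [← hLm, Equiv.symm_apply_apply]
      have := hmono.monotone (Fin.zero_le (s⁻¹ j₀))
      simp only [Function.comp_apply] at this; rw [show s (s⁻¹ j₀) = j₀ from s.apply_symm_apply j₀] at this
      rw [hfj] at this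
      rw [hw'symm]
      exact this
    · apply minL_le
      have h3 : hMap w' (w'.symm ((0 : Fin n), false)) = false := hMap_symm w' _
      rw [hMapw'] at h3
      exact h3
  set m := (w'.symm ((0 : Fin n), false)).val with hm_def
  have key : ∀ y : Fin n × Bool, (shift m w').symm y = w'.symm y - w'.symm ((0 : Fin n), false) := by
    intro y
    have h4 : (shift m w') (w'.symm y - w'.symm ((0 : Fin n), false)) = y := by
      rw [shift_apply, hm0, sub_add_cancel, Equiv.apply_symm_apply]
    exact (Equiv.symm_apply_eq _).mpr h4.symm
  have hle : ∀ j : Fin n, w'.symm ((0 : Fin n), false) ≤ w'.symm (j, false) :=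
    fun j => hg.monotone (Fin.zero_le j)
  have hLP : IsLeftPreferred (shift m w') := by
    constructor
    · have hfe : (fun j : Fin n => (shift m w').symm (j, false)) =
          fun j : Fin n => w'.symm (j, false) - w'.symm ((0 : Fin n), false) :=
        funext fun j => key (j, false)
      rw [hfe]
      intro a b hab
      rw [Fin.lt_def, Fin.sub_val_of_le (hle a), Fin.sub_val_of_le (hle b)]
      have h1 : (w'.symm ((0 : Fin n), false)).val ≤ (w'.symm ((a : Fin n), false)).val := hle a
      have h2 : (w'.symm ((a : Fin n), false)).val < (w'.symm ((b : Fin n), false)).val := hg hab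
      omega
    · rw [shift_apply, hm0, zero_add, Equiv.apply_symm_apply]
  constructor
  · rw [hproj]; exact hLP
  · refine ⟨π, ?_⟩
    rw [hproj, hw'_def]
    congr 1
    rw [hm_def, hmin]

lemma isLP_projLP [NeZero n] (w : GaussCode n) : IsLeftPreferred (projLP w) :=
  (projLP_spec w).1

lemma oe_projLP [NeZero n] (w : GaussCode n) : OrientedEquiv w (projLP w) := by
  obtain ⟨π, h⟩ := (projLP_spec w).2
  exact ⟨π, (minL w).val, h⟩

/-! ### Uniqueness of left preferred representatives at a given anchor -/

lemma permAct_eq_self [NeZero n] {v : GaussCode n} (hv : IsLeftPreferred v)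
    (τ : Equiv.Perm (Fin n)) (h : IsLeftPreferred (permAct τ v)) : permAct τ v = v := by
  have he : ∀ j : Fin n, (permAct τ v).symm (j, false) = v.symm (τ⁻¹ j, false) := by
    intro j
    have h1 : permAct τ v (v.symm (τ⁻¹ j, false)) = (j, false) := by
      show (τ ((v (v.symm (τ⁻¹ j, false))).1), (v (v.symm (τ⁻¹ j, false))).2) = (j, false)
      rw [Equiv.apply_symm_apply]
      simp
    rw [← h1, Equiv.symm_apply_apply]
  have hg : StrictMono (fun j : Fin n => v.symm (j, false)) := hv.1
  have hg' : StrictMono (fun j : Fin n => v.symm (τ⁻¹ j, false)) := by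
    have : (fun j : Fin n => v.symm (τ⁻¹ j, false)) =
        (fun j : Fin n => (permAct τ v).symm (j, false)) := by
      funext j; rw [he]
    rw [this]; exact h.1
  have hrange : Set.range (fun j : Fin n => v.symm (τ⁻¹ j, false)) =
      Set.range (fun j : Fin n => v.symm (j, false)) := by
    have : (fun j : Fin n => v.symm (τ⁻¹ j, false)) =
        (fun j : Fin n => v.symm (j, false)) ∘ (τ⁻¹ : Equiv.Perm (Fin n)) := rfl
    rw [this, Set.range_comp, Equiv.range_eq_univ, Set.image_univ]
  haveI hwf : WellFoundedLT (Fin n) := inferInstance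
  have heq : (fun j : Fin n => v.symm (τ⁻¹ j, false)) = (fun j : Fin n => v.symm (j, false)) :=
    (@StrictMono.range_inj (Fin n) (Fin (2 * n)) _ _ hwf _ _ hg' hg).mp hrange
  have hτ : ∀ j : Fin n, τ⁻¹ j = j := by
    intro j
    have := congrFun heq j
    have h2 := v.symm.injective this
    exact ((Prod.mk.injEq _ _ _ _).mp h2).1
  have : τ = 1 := by
    have hτinv : τ⁻¹ = 1 := Equiv.ext hτ
    rw [← inv_inv τ, hτinv]; rfl
  rw [this, permAct_one]

lemma lp_unique [NeZero n] {w : GaussCode n} {π₁ π₂ : Equiv.Perm (Fin n)} {m₁ m₂ : ℕ}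
    (h1 : IsLeftPreferred (shift m₁ (permAct π₁ w)))
    (h2 : IsLeftPreferred (shift m₂ (permAct π₂ w)))
    (hm : (m₁ : Fin (2 * n)) = (m₂ : Fin (2 * n))) :
    shift m₁ (permAct π₁ w) = shift m₂ (permAct π₂ w) := by
  have e : shift m₂ (permAct π₂ w) = permAct (π₂ * π₁⁻¹) (shift m₁ (permAct π₁ w)) := by
    rw [shift_permAct m₁, permAct_permAct, ← shift_permAct]
    have : π₂ * π₁⁻¹ * π₁ = π₂ := by group
    rw [this, shift_congr hm]
  rw [e]
  exact (permAct_eq_self h1 _ (e ▸ h2)).symm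

/-! ### The number of `L` positions strictly before a given position -/

/-- Count of `L` positions strictly before `m`. -/
def cntL [NeZero n] (u : GaussCode n) (m : Fin (2 * n)) : ℕ :=
  (Finset.univ.filter (fun i => i < m ∧ hMap u i = false)).card

lemma cntL_lt [NeZero n] (u : GaussCode n) (m : Fin (2 * n)) (hm : hMap u m = false) :
    cntL u m < n := by
  have hcardL : (Finset.univ.filter (fun i => hMap u i = false)).card = n := by
    have himg : Finset.univ.filter (fun i => hMap u i = false) =
        Finset.univ.image (fun j : Fin n => u.symm (j, false)) := by
      ext i
      simp only [Finset.mem_filter, Finset.mem_univ, true_and, Finset.mem_image]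
      constructor
      · intro h
        refine ⟨(u i).1, ?_⟩
        have : u i = ((u i).1, false) := Prod.ext rfl h
        rw [← this, Equiv.symm_apply_apply]
      · rintro ⟨j, rfl⟩
        exact hMap_symm u j
    rw [himg, Finset.card_image_of_injective _ (fun a b h => by
      have := u.symm.injective h
      exact ((Prod.mk.injEq _ _ _ _).mp this).1)]
    simp
  refine lt_of_lt_of_le ?_ hcardL.le
  unfold cntL
  apply Finset.card_lt_card
  have hsub : Finset.univ.filter (fun i => i < m ∧ hMap u i = false) ⊆
      Finset.univ.filter (fun i => hMap u i = false) := by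
    intro i hi
    simp only [Finset.mem_filter] at hi ⊢
    exact ⟨hi.1, hi.2.2⟩
  rw [Finset.ssubset_iff_of_subset hsub]
  exact ⟨m, by simpa using hm, by simp⟩

/-! ### The key induction: iterates of `shiftLP` reach every `L` anchor -/

lemma hMap_zero [NeZero n] {u : GaussCode n} (hu : IsLeftPreferred u) :
    hMap u 0 = false := by
  rw [hMap, hu.2]

lemma iterate_shiftLP_eq [NeZero n] (u : GaussCode n) (hu : IsLeftPreferred u) :
    ∀ (N : ℕ) (m : Fin (2 * n)), m.val < N → hMap u m = false →
      ∃ π : Equiv.Perm (Fin n), shiftLP^[cntL u m] u = shift m.val (permAct π u) := by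
  intro N
  induction N with
  | zero => intro m hm; omega
  | succ N ih =>
    intro m hmN hmL
    by_cases h0 : m = 0
    · subst h0
      have hc : cntL u 0 = 0 := by
        unfold cntL
        rw [Finset.card_eq_zero, Finset.filter_eq_empty_iff]
        intro i _
        simp [Fin.not_lt_zero]
      rw [hc]
      refine ⟨1, ?_⟩
      simp only [Function.iterate_zero, id_eq]
      rw [permAct_one]
      have : ((0 : Fin (2 * n)).val) = 0 := rfl
      rw [this, shift_zero]
    · set T := Finset.univ.filter (fun j => j < m ∧ hMap u j = false) with hT_def
      have hT : T.Nonempty := by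
        refine ⟨0, ?_⟩
        simp only [hT_def, Finset.mem_filter, Finset.mem_univ, true_and]
        exact ⟨lt_of_le_of_ne (Fin.zero_le m) (Ne.symm h0), hMap_zero hu⟩
      set m₁ := T.max' hT with hm₁_def
      have hm₁ : m₁ < m ∧ hMap u m₁ = false := by
        have hmem := T.max'_mem hT
        exact (Finset.mem_filter.mp hmem).2
      have hgap : ∀ j : Fin (2 * n), m₁ < j → j < m → hMap u j = true := by
        intro j hj1 hj2
        by_contra hc
        have hjf : hMap u j = false := by
          cases hb : hMap u j
          · rfl
          · exact absurd hb hc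
        have hjT : j ∈ T := by
          simp only [hT_def, Finset.mem_filter, Finset.mem_univ, true_and]
          exact ⟨hj2, hjf⟩
        have := T.le_max' j hjT
        exact absurd this (not_le.mpr hj1)
      have hm₁N : m₁.val < N := by
        have h1 : m₁.val < m.val := hm₁.1
        omega
      obtain ⟨π₁, h₁⟩ := ih m₁ hm₁N hm₁.2
      have hcard : cntL u m = cntL u m₁ + 1 := by
        unfold cntL
        have hins : Finset.univ.filter (fun j => j < m ∧ hMap u j = false) =
            insert m₁ (Finset.univ.filter (fun j => j < m₁ ∧ hMap u j = false)) := by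
          ext j
          simp only [Finset.mem_filter, Finset.mem_univ, true_and, Finset.mem_insert]
          constructor
          · rintro ⟨hjm, hjf⟩
            rcases lt_trichotomy j m₁ with h | h | h
            · exact Or.inr ⟨h, hjf⟩
            · exact Or.inl h
            · exact absurd hjf (by rw [hgap j h hjm]; simp)
          · rintro (rfl | ⟨h, hf⟩)
            · exact ⟨hm₁.1, hm₁.2⟩
            · exact ⟨h.trans hm₁.1, hf⟩
        rw [hins, Finset.card_insert_of_notMem (by simp)]
      rw [hcard, Function.iterate_succ_apply', h₁]
      have hlt : m₁.val + 1 ≤ m.val := hm₁.1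
      have hm2n : m.val < 2 * n := m.isLt
      set x := shift (1 + m₁.val) (permAct π₁ u) with hx_def
      have hstep : shiftLP (shift m₁.val (permAct π₁ u)) = projLP x := by
        rw [shiftLP, hx_def, shift_shift]
      set a : Fin (2 * n) := ⟨m.val - (m₁.val + 1), by omega⟩ with ha_def
      have hmap_x : ∀ j : Fin (2 * n),
          hMap x j = hMap u (j + (((1 + m₁.val : ℕ)) : Fin (2 * n))) := fun j => rfl
      have hsmall : 1 + m₁.val < 2 * n := by omega
      have hcast : ∀ j : Fin (2 * n), j.val + (1 + m₁.val) < 2 * n →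
          (j + (((1 + m₁.val : ℕ)) : Fin (2 * n))).val = j.val + (1 + m₁.val) := by
        intro j hj
        rw [Fin.add_def]
        simp only [Fin.val_natCast]
        rw [Nat.mod_eq_of_lt hsmall, Nat.mod_eq_of_lt hj]
      have haval : a.val + (1 + m₁.val) = m.val := by
        simp only [ha_def]
        omega
      have haL : hMap x a = false := by
        rw [hmap_x]
        have : (a + (((1 + m₁.val : ℕ)) : Fin (2 * n))) = m := by
          apply Fin.ext
          rw [hcast a (by omega), haval]
        rw [this]
        exact hmL
      have hminx : minL x = a := by
        apply le_antisymm (minL_le x haL)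
        by_contra hcon
        push_neg at hcon
        set b := minL x with hb_def
        have hbL : hMap x b = false := hMap_minL x
        have hbv : b.val < a.val := hcon
        have hbsum : b.val + (1 + m₁.val) < 2 * n := by omega
        have hbval : (b + (((1 + m₁.val : ℕ)) : Fin (2 * n))).val = b.val + (1 + m₁.val) :=
          hcast b hbsum
        have h1 : m₁ < b + (((1 + m₁.val : ℕ)) : Fin (2 * n)) := by
          rw [Fin.lt_def, hbval]; omega
        have h2 : b + (((1 + m₁.val : ℕ)) : Fin (2 * n)) < m := by
          rw [Fin.lt_def, hbval]; omega
        have := hgap _ h1 h2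
        rw [hmap_x] at hbL
        rw [this] at hbL
        simp at hbL
      obtain ⟨hxLP, πₓ, hπₓ⟩ := And.intro (projLP_spec x).1 (projLP_spec x).2
      refine ⟨πₓ * π₁, ?_⟩
      rw [hstep, hπₓ, hminx, hx_def, shift_permAct (1 + m₁.val), permAct_permAct,
        ← shift_permAct, shift_shift, haval]

/-! ### The `shiftLP`-orbit of `projLP w` is the set of left preferred codes
orientedly equivalent to `w` -/

lemma isLP_iterate [NeZero n] (w : GaussCode n) (k : ℕ) :
    IsLeftPreferred (shiftLP^[k] (projLP w)) := by
  cases k with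
  | zero => exact isLP_projLP w
  | succ k =>
    rw [Function.iterate_succ_apply', shiftLP]
    exact isLP_projLP _

lemma oe_shiftLP [NeZero n] (v : GaussCode n) : OrientedEquiv v (shiftLP v) := by
  have h1 : OrientedEquiv v (shift 1 v) := ⟨1, 1, by rw [permAct_one]⟩
  exact oe_trans h1 (oe_projLP (shift 1 v))

lemma mem_orbit_iff [NeZero n] (w v : GaussCode n) :
    (∃ k < n, v = shiftLP^[k] (projLP w)) ↔
      (OrientedEquiv w v ∧ IsLeftPreferred v) := by
  constructor
  · rintro ⟨k, hk, rfl⟩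
    refine ⟨?_, isLP_iterate w k⟩
    clear hk
    induction k with
    | zero => exact oe_projLP w
    | succ k ih =>
      rw [Function.iterate_succ_apply']
      exact oe_trans ih (oe_shiftLP _)
  · rintro ⟨hoe, hLP⟩
    have hu : IsLeftPreferred (projLP w) := isLP_projLP w
    have hoe' : OrientedEquiv (projLP w) v := oe_trans (oe_symm (oe_projLP w)) hoe
    obtain ⟨π', m', he⟩ := hoe'
    set u := projLP w with hu_def
    set m₀ : Fin (2 * n) := ((m' : ℕ) : Fin (2 * n)) with hm₀_def
    have he2 : v = shift m₀.val (permAct π' u) := by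
      rw [he]
      exact shift_congr (Fin.cast_val_eq_self m₀).symm (permAct π' u)
    have hL : hMap u m₀ = false := by
      have h0 := hLP.2
      rw [he2] at h0
      have h0' : (shift m₀.val (permAct π' u)) 0 = ((0 : Fin n), false) := h0
      rw [shift_apply, Fin.cast_val_eq_self, zero_add] at h0'
      have := congrArg Prod.snd h0'
      exact this
    obtain ⟨π'', hfin⟩ := iterate_shiftLP_eq u hu (m₀.val + 1) m₀ (Nat.lt_succ_self _) hL
    refine ⟨cntL u m₀, cntL_lt u m₀ hL, ?_⟩
    rw [hfin, he2]
    have hv2 : IsLeftPreferred (shift m₀.val (permAct π' u)) := he2 ▸ hLP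
    have hv3 : IsLeftPreferred (shift m₀.val (permAct π'' u)) := hfin ▸ isLP_iterate w _
    exact lp_unique hv2 hv3 rfl

/-! ### The lexicographic order -/

lemma entryKey_inj : Function.Injective (entryKey (n := n)) := by
  rintro ⟨a, b⟩ ⟨c, d⟩ h
  simp only [entryKey] at h
  cases b <;> cases d <;>
    simp only [if_true, if_false, Bool.false_eq_true, Bool.true_eq_false] at h <;>
    simp only [Prod.mk.injEq] <;> refine ⟨Fin.ext ?_, ?_⟩ <;>
    first | omega | (exfalso; omega) | trivial

lemma lexLe_refl (w : GaussCode n) : lexLe w w := Or.inl rfl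

lemma lexLe_total (w w' : GaussCode n) : lexLe w w' ∨ lexLe w' w := by
  by_cases h : w = w'
  · exact Or.inl (Or.inl h)
  · have hne : ∃ i, w i ≠ w' i := by
      by_contra hc
      push_neg at hc
      exact h (Equiv.coe_fn_injective (funext hc))
    set D := Finset.univ.filter (fun i => w i ≠ w' i) with hD_def
    have hD : D.Nonempty := by
      obtain ⟨i, hi⟩ := hne
      exact ⟨i, by simp [hD_def, hi]⟩
    set i := D.min' hD with hi_def
    have hiD : w i ≠ w' i := by
      have := D.min'_mem hD
      simpa [hD_def] using this
    have hpre : ∀ k, k < i → w k = w' k := by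
      intro k hk
      by_contra hc
      have hkD : k ∈ D := by simp [hD_def, hc]
      exact absurd (D.min'_le k hkD) (not_le.mpr hk)
    have hkey : entryKey (w i) ≠ entryKey (w' i) := fun hc => hiD (entryKey_inj hc)
    rcases lt_or_gt_of_ne hkey with hlt | hgt
    · exact Or.inl (Or.inr ⟨i, hpre, hlt⟩)
    · exact Or.inr (Or.inr ⟨i, fun k hk => (hpre k hk).symm, hgt⟩)

lemma lexLe_antisymm {w w' : GaussCode n} (h1 : lexLe w w') (h2 : lexLe w' w) : w = w' := by
  rcases h1 with rfl | ⟨i, hpre1, hk1⟩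
  · rfl
  rcases h2 with rfl | ⟨i', hpre2, hk2⟩
  · rfl
  exfalso
  rcases lt_trichotomy i i' with h | h | h
  · rw [hpre2 i h] at hk1
    exact lt_irrefl _ hk1
  · subst h
    omega
  · rw [hpre1 i' h] at hk2
    exact lt_irrefl _ hk2

lemma lexLe_trans {w₁ w₂ w₃ : GaussCode n} (h1 : lexLe w₁ w₂) (h2 : lexLe w₂ w₃) :
    lexLe w₁ w₃ := by
  rcases h1 with rfl | ⟨i, hpre1, hk1⟩
  · exact h2
  rcases h2 with rfl | ⟨i', hpre2, hk2⟩
  · exact Or.inr ⟨i, hpre1, hk1⟩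
  rcases lt_trichotomy i i' with h | h | h
  · exact Or.inr ⟨i, fun k hk => (hpre1 k hk).trans (hpre2 k (hk.trans h)), by
      rw [← hpre2 i h]; exact hk1⟩
  · subst h
    exact Or.inr ⟨i, fun k hk => (hpre1 k hk).trans (hpre2 k hk), lt_trans hk1 hk2⟩
  · exact Or.inr ⟨i', fun k hk => (hpre1 k (hk.trans h)).trans (hpre2 k hk), by
      rw [hpre1 i' h]; exact hk2⟩

lemma exists_lex_min (N : ℕ) (hN : 0 < N) (f : ℕ → GaussCode n) :
    ∃ k < N, ∀ j < N, lexLe (f k) (f j) := by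
  induction N with
  | zero => omega
  | succ N ih =>
    by_cases hN0 : N = 0
    · subst hN0
      refine ⟨0, Nat.zero_lt_one, ?_⟩
      intro j hj
      interval_cases j
      exact lexLe_refl _
    · obtain ⟨k, hk, hmin⟩ := ih (Nat.pos_of_ne_zero hN0)
      rcases lexLe_total (f k) (f N) with hle | hge
      · refine ⟨k, hk.trans (Nat.lt_succ_self N), ?_⟩
        intro j hj
        rcases Nat.lt_succ_iff_lt_or_eq.mp hj with hj' | rfl
        · exact hmin j hj'
        · exact hle
      · refine ⟨N, Nat.lt_succ_self N, ?_⟩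
        intro j hj
        rcases Nat.lt_succ_iff_lt_or_eq.mp hj with hj' | rfl
        · exact lexLe_trans hge (hmin j hj')
        · exact lexLe_refl _

/-! ### Characterization of `projLC` -/

lemma projLC_spec [NeZero n] (w : GaussCode n) :
    (∃ k < n, projLC w = shiftLP^[k] (projLP w)) ∧
      ∀ k < n, lexLe (projLC w) (shiftLP^[k] (projLP w)) := by
  have hex : ∃ v : GaussCode n, (∃ k < n, v = shiftLP^[k] (projLP w)) ∧
      ∀ k < n, lexLe v (shiftLP^[k] (projLP w)) := by
    obtain ⟨k, hk, hmin⟩ := exists_lex_min n (Nat.pos_of_ne_zero (NeZero.ne n))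
      (fun k => shiftLP^[k] (projLP w))
    exact ⟨shiftLP^[k] (projLP w), ⟨k, hk, rfl⟩, hmin⟩
  have : projLC w = hex.choose := by
    rw [projLC]
    exact dif_pos hex
  rw [this]
  exact hex.choose_spec

lemma projLC_char [NeZero n] (w : GaussCode n) :
    OrientedEquiv w (projLC w) ∧ IsLeftPreferred (projLC w) ∧
      ∀ v, OrientedEquiv w v → IsLeftPreferred v → lexLe (projLC w) v := by
  obtain ⟨⟨k, hk, hek⟩, hmin⟩ := projLC_spec w
  have hmem := (mem_orbit_iff w (projLC w)).mp ⟨k, hk, hek⟩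
  refine ⟨hmem.1, hmem.2, ?_⟩
  intro v hoe hlp
  obtain ⟨k', hk', rfl⟩ := (mem_orbit_iff w v).mpr ⟨hoe, hlp⟩
  exact hmin k' hk'

lemma oe_projLC [NeZero n] (w : GaussCode n) : OrientedEquiv w (projLC w) :=
  (projLC_char w).1

lemma projLC_invariant [NeZero n] {w w' : GaussCode n} (h : OrientedEquiv w w') :
    projLC w = projLC w' := by
  obtain ⟨h1, h2, h3⟩ := projLC_char w
  obtain ⟨h1', h2', h3'⟩ := projLC_char w'
  exact lexLe_antisymm (h3 _ (oe_trans h h1') h2') (h3' _ (oe_trans (oe_symm h) h1) h2)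

end GaussCode

open GaussCode in
/-- two Gauss codes are unorientedly equivalent iff the unordered
pairs `{proj^LC(w), proj^LC(rev(w))}` and `{proj^LC(w'), proj^LC(rev(w'))}` coincide. -/
theorem stmt10 (n : ℕ) [NeZero n] (w w' : GaussCode n) :
    UnorientedEquiv w w' ↔
      ({projLC w, projLC (rev w)} : Set (GaussCode n)) =
        {projLC w', projLC (rev w')} := by
  constructor
  · rintro (h | h)
    · rw [projLC_invariant h, projLC_invariant (oe_rev h)]
    · have h2 : OrientedEquiv (rev w) w' := by
        have := oe_rev h
        rwa [rev_rev] at this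
      rw [projLC_invariant h, projLC_invariant h2, Set.pair_comm]
  · intro h
    have hmem : projLC w ∈ ({projLC w', projLC (rev w')} : Set (GaussCode n)) := by
      rw [← h]; exact Set.mem_insert _ _
    rcases hmem with heq | heq
    · left
      exact oe_trans (oe_trans (oe_projLC w) (heq ▸ oe_symm (oe_projLC w'))) (oe_refl w')
    · right
      exact oe_trans (oe_projLC w) (heq ▸ oe_symm (oe_projLC (rev w')))
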